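/- Let N ≥ 2 be an integer, let arccot denote the inverse cotangent with range (0, π), and suppose α ∈ ℝ satisfies (1/2)·arccot( (−N−2)/(2√(N−1)) ) ≤ α < π/2. Let v = (sin α, cos α) ∈ ℂ². Then for every φ ∈ [−π, π], the one-step target probability satisfies |(A(φ)·v)₀|² ≤ |(A(0)·v)₀|²; that is, the phase change φ = 0 (no rotation) is optimal in the region R₃. -/

import Mathlib

open Real Complex Matrix

/-- The generalized Grover iteration matrix with phase `φ` for a database of size `N`. -/
noncomputable def groverA (N : ℕ) (φ : ℝ) : Matrix (Fin 2) (Fin 2) ℂ :=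
  !![Complex.exp (φ * Complex.I) * ((1 - Complex.exp (φ * Complex.I)) / (N : ℂ) - 1),
     ((Real.sqrt ((N : ℝ) - 1) : ℂ) / (N : ℂ)) * (1 - Complex.exp (φ * Complex.I));
     ((Real.sqrt ((N : ℝ) - 1) : ℂ) / (N : ℂ)) * Complex.exp (φ * Complex.I) *
       (1 - Complex.exp (φ * Complex.I)),
     -(1 / (N : ℂ) + (1 - 1 / (N : ℂ)) * Complex.exp (φ * Complex.I))]

/-- The one-step target probability: the squared modulus of the first component of `A(φ)·v`. -/
noncomputable def targetProb (N : ℕ) (φ : ℝ) (v : Fin 2 → ℂ) : ℝ :=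
  ‖(groverA N φ).mulVec v 0‖ ^ 2

/-- The inverse cotangent with range `(0, π)`. -/
noncomputable def arccot (x : ℝ) : ℝ := Real.pi / 2 - Real.arctan x

lemma targetProb_eq (N : ℕ) (hN : 0 < N) (φ s c : ℝ) :
    targetProb N φ ![(s:ℂ),(c:ℂ)] =
      (-(s/N)*(Real.cos φ^2 - Real.sin φ^2) + (s/N - s - Real.sqrt ((N:ℝ)-1)*c/N)*Real.cos φ
        + Real.sqrt ((N:ℝ)-1)*c/N)^2
      + (-(s/N)*(2*Real.cos φ*Real.sin φ) + (s/N - s - Real.sqrt ((N:ℝ)-1)*c/N)*Real.sin φ)^2 := by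
  have hN' : (N:ℂ) ≠ 0 := Nat.cast_ne_zero.mpr hN.ne'
  have hz : Complex.exp (φ * Complex.I) = (Real.cos φ : ℂ) + (Real.sin φ : ℂ) * Complex.I := by
    rw [Complex.exp_mul_I, Complex.ofReal_cos, Complex.ofReal_sin]
  have hw : (groverA N φ).mulVec ![(s:ℂ),(c:ℂ)] 0 =
      Complex.ofReal (-(s/N)*(Real.cos φ^2 - Real.sin φ^2)
        + (s/N - s - Real.sqrt ((N:ℝ)-1)*c/N)*Real.cos φ + Real.sqrt ((N:ℝ)-1)*c/N)
      + Complex.ofReal (-(s/N)*(2*Real.cos φ*Real.sin φ)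
        + (s/N - s - Real.sqrt ((N:ℝ)-1)*c/N)*Real.sin φ) * Complex.I := by
    simp only [groverA, Matrix.mulVec, dotProduct, Fin.sum_univ_two, hz,
      Matrix.cons_val', Matrix.cons_val_zero, Matrix.cons_val_one, Matrix.head_cons,
      Matrix.empty_val', Matrix.cons_val_fin_one, Matrix.head_fin_const, Matrix.of_apply]
    push_cast
    field_simp
    ring_nf
    simp only [Complex.I_sq]
    ring
  rw [targetProb, hw, Complex.sq_norm, Complex.normSq_add_mul_I]

set_option maxHeartbeats 1000000 in
theorem stmt_13 (N : ℕ) (hN : 2 ≤ N) (α : ℝ)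
    (hα : (1 / 2) * arccot ((-(N : ℝ) - 2) / (2 * Real.sqrt ((N : ℝ) - 1))) ≤ α ∧
      α < Real.pi / 2)
    (v : Fin 2 → ℂ) (hv : v = ![(Real.sin α : ℂ), (Real.cos α : ℂ)]) :
    ∀ φ ∈ Set.Icc (-Real.pi) Real.pi,
      targetProb N φ v ≤ targetProb N 0 v := by
  obtain ⟨hα1, hα2⟩ := hα
  intro φ _
  subst hv
  set n : ℝ := (N : ℝ) with hn
  have hn2 : (2:ℝ) ≤ n := by rw [hn]; exact_mod_cast hN
  have hn0 : (0:ℝ) < n := by linarith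
  have hnne : n ≠ 0 := hn0.ne'
  set r : ℝ := Real.sqrt (n - 1) with hrdef
  have hr2 : r ^ 2 = n - 1 := Real.sq_sqrt (by linarith)
  have hrpos : (0:ℝ) < r := Real.sqrt_pos.mpr (by linarith)
  -- the angle δ
  set δ : ℝ := Real.arctan (2*r/(n+2)) with hδ
  have hδpos : 0 < δ := by rw [← Real.arctan_zero]; exact Real.arctan_strictMono (by positivity)
  have hδlt : δ < π/2 := Real.arctan_lt_pi_div_two _
  have harccot : arccot ((-n - 2) / (2 * r)) = π - δ := by
    rw [arccot]
    have h1 : (-n - 2)/(2*r) = -((n+2)/(2*r)) := by ring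
    have h2 : Real.arctan ((n+2)/(2*r)) = π/2 - δ := by
      have hinv : (2*r/(n+2))⁻¹ = (n+2)/(2*r) := by
        rw [inv_div]
      rw [← hinv, Real.arctan_inv_of_pos (by positivity)]
    rw [h1, Real.arctan_neg, h2]; ring
  have h2α : π - δ ≤ 2*α := by rw [harccot] at hα1; linarith
  have h2α' : 2*α < π := by linarith
  -- sin (2α + δ) ≤ 0
  have hsin : Real.sin (2*α + δ) ≤ 0 := by
    have h0 : Real.sin ((2*α + δ - π) + π) = -Real.sin (2*α + δ - π) := Real.sin_add_pi _
    have h1 : 0 ≤ Real.sin (2*α + δ - π) :=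
      Real.sin_nonneg_of_nonneg_of_le_pi (by linarith) (by linarith [Real.pi_pos])
    have heq : (2*α + δ - π) + π = 2*α + δ := by ring
    rw [heq] at h0; linarith
  have hcosδ : 0 < Real.cos δ := Real.cos_arctan_pos _
  have htanδ : Real.sin δ * (n+2) = 2*r*Real.cos δ := by
    have h := Real.tan_arctan (2*r/(n+2))
    rw [← hδ, Real.tan_eq_sin_div_cos] at h
    field_simp at h
    linarith
  have hg : (n+2) * Real.sin (2*α) + 2*r*Real.cos (2*α) ≤ 0 := by
    have hexp : ((n+2) * Real.sin (2*α) + 2*r*Real.cos (2*α)) * Real.cos δ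
        = (n+2) * Real.sin (2*α + δ) := by
      rw [Real.sin_add]
      linear_combination (-Real.cos (2*α)) * htanδ
    nlinarith [mul_nonneg (by linarith : (0:ℝ) ≤ n + 2) (neg_nonneg.mpr hsin)]
  set s : ℝ := Real.sin α with hs'
  set c : ℝ := Real.cos α with hc'
  have hpy : s^2 + c^2 = 1 := Real.sin_sq_add_cos_sq α
  have hs : 0 ≤ s := Real.sin_nonneg_of_nonneg_of_le_pi (by linarith [Real.pi_pos]) (by linarith [Real.pi_pos])
  have hc : 0 ≤ c := Real.cos_nonneg_of_mem_Icc ⟨by linarith [Real.pi_pos], le_of_lt hα2⟩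
  have hK : 0 ≤ r*(s^2 - c^2) - (n+2)*s*c := by
    have hkey : r*(s^2 - c^2) - (n+2)*s*c
        = -((n+2) * Real.sin (2*α) + 2*r*Real.cos (2*α))/2 + r*(s^2 + c^2 - 1) := by
      rw [Real.sin_two_mul, Real.cos_two_mul]
      ring
    rw [hkey, hpy]
    linarith
  -- unfold targetProb
  have hN0 : 0 < N := by omega
  rw [targetProb_eq N hN0, targetProb_eq N hN0]
  rw [Real.cos_zero, Real.sin_zero]
  set t : ℝ := Real.cos φ with ht'
  set u : ℝ := Real.sin φ with hu'
  have hu : u^2 = 1 - t^2 := by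
    have := Real.sin_sq_add_cos_sq φ; linarith
  have ht1 : t ≤ 1 := Real.cos_le_one φ
  have h0eq : (-(s/n)*((1:ℝ)^2 - (0:ℝ)^2) + (s/n - s - r*c/n)*1 + r*c/n)^2
      + (-(s/n)*(2*1*0) + (s/n - s - r*c/n)*0)^2 = s^2 := by
    field_simp
    ring
  rw [h0eq]
  have hφeq : (-(s/n)*(t^2 - u^2) + (s/n - s - r*c/n)*t + r*c/n)^2
      + (-(s/n)*(2*t*u) + (s/n - s - r*c/n)*u)^2
      = ((-s*(t^2 - u^2) + (s - n*s - r*c)*t + r*c)^2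
        + (-2*s*t*u + (s - n*s - r*c)*u)^2) / n^2 := by
    field_simp
  rw [hφeq, div_le_iff₀ (by positivity : (0:ℝ) < n^2)]
  have key : s^2*n^2 - ((-s*(t^2 - u^2) + (s - n*s - r*c)*t + r*c)^2
        + (-2*s*t*u + (s - n*s - r*c)*u)^2)
      = 2*r*(1-t)*(r*(s^2 - c^2) - (n+2)*s*c) + 4*s*c*r*(1-t)^2 := by
    linear_combination (-2*s^2 - s^2*u^2 + 2*s^2*t - s^2*t^2 - 2*r*s*c*t - r^2*c^2
      + 2*n*s^2 - 2*n*s^2*t - 2*n*r*s*c - n^2*s^2) * hu + (-2*s^2 + 2*s^2*t) * hr2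
  have t2 : 0 ≤ 2*r*(1-t)*(r*(s^2 - c^2) - (n+2)*s*c) :=
    mul_nonneg (by nlinarith) hK
  have t3 : 0 ≤ 4*s*c*r*(1-t)^2 := by
    have : (0:ℝ) ≤ (1-t)^2 := sq_nonneg _
    have h4 : 0 ≤ 4*s*c*r := by positivity
    exact mul_nonneg h4 this
  linarith
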